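/- arXiv:2401.13788 — 2 statements merged into one kernel-verified Lean document; each statement's English description precedes it below -/
import Mathlib

section
/- Let I be a stable monomial ideal and x^μ ∈ I a monomial. Then there exists a unique minimal monomial generator g of I and a unique monomial h such that x^μ = g·h and every variable x_i dividing h satisfies i ≤ min(g), where min(g) is the index of the smallest variable dividing g. -/
/-- The class of an exponent vector: the least index with nonzero exponent. -/
noncomputable def cls {n : ℕ} (μ : Fin n → ℕ) : ℕ := sInf {i : ℕ | ∃ hi : i < n, μ ⟨i, hi⟩ ≠ 0}

/-- Pommaret involutive divisibility: `μ` divides `ν` and the quotient only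
involves the multiplicative variables `x_1, …, x_{cls μ}` of `μ`. -/
def InvDvd {n : ℕ} (μ ν : Fin n → ℕ) : Prop :=
  (∀ i, μ i ≤ ν i) ∧ ∀ i : Fin n, cls μ < (i : ℕ) → ν i = μ i

/-- Membership of a monomial in the monomial ideal generated by `H`. -/
def MemMonIdeal {n : ℕ} (H : Set (Fin n → ℕ)) (ν : Fin n → ℕ) : Prop :=
  ∃ h ∈ H, ∀ i, h i ≤ ν i

/-- A set of exponent vectors is (the set of monomials of) a monomial ideal if
it is closed under taking monomial multiples. -/
def IsMonIdeal {n : ℕ} (S : Set (Fin n → ℕ)) : Prop :=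
  ∀ μ ∈ S, ∀ ν : Fin n → ℕ, (∀ i, μ i ≤ ν i) → ν ∈ S

/-- The elementary move of stability: replace x^μ by x^μ · x_i / x_{cls μ}. -/
noncomputable def bump {n : ℕ} (μ : Fin n → ℕ) (i : Fin n) : Fin n → ℕ :=
  fun j => if (j : ℕ) = cls μ then μ j - 1 else if j = i then μ j + 1 else μ j

/-- A monomial ideal is stable if for every monomial x^μ in it and every index
i greater than the class of μ, the monomial x^μ · x_i / x_{cls μ} is in it. -/
def IsStable {n : ℕ} (S : Set (Fin n → ℕ)) : Prop :=
  ∀ μ ∈ S, ∀ i : Fin n, cls μ < (i : ℕ) → bump μ i ∈ S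

/-- The minimal monomial generating set: monomials of S not properly divisible
by another monomial of S. -/
def MinGen {n : ℕ} (S : Set (Fin n → ℕ)) : Set (Fin n → ℕ) :=
  {g | g ∈ S ∧ ∀ ν ∈ S, (∀ i, ν i ≤ g i) → ν = g}

/-- A monomial ideal is quasi-stable if it possesses a finite Pommaret basis:
a finite generating set H such that every monomial of the ideal has exactly
one involutive divisor in H. -/
def IsQuasiStable {n : ℕ} (S : Set (Fin n → ℕ)) : Prop :=
  ∃ H : Finset (Fin n → ℕ), (∀ ν, ν ∈ S ↔ MemMonIdeal ↑H ν) ∧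
    ∀ ν ∈ S, ∃! h, h ∈ H ∧ InvDvd h ν

section Aux
variable {n : ℕ}

lemma cls_mem {μ : Fin n → ℕ} (h : μ ≠ 0) :
    ∃ hlt : cls μ < n, μ ⟨cls μ, hlt⟩ ≠ 0 := by
  have hne : {i : ℕ | ∃ hi : i < n, μ ⟨i, hi⟩ ≠ 0}.Nonempty := by
    obtain ⟨i, hi⟩ := Function.ne_iff.mp h
    exact ⟨(i : ℕ), i.isLt, by simpa using hi⟩
  exact Nat.sInf_mem hne

lemma cls_le {μ : Fin n → ℕ} {i : Fin n} (h : μ i ≠ 0) : cls μ ≤ (i : ℕ) :=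
  Nat.sInf_le ⟨i.isLt, by simpa using h⟩

lemma eq_zero_of_lt_cls {μ : Fin n → ℕ} {i : Fin n} (h : (i : ℕ) < cls μ) : μ i = 0 := by
  by_contra hne
  exact absurd (cls_le hne) (not_le.mpr h)

lemma cls_mono {ν g : Fin n → ℕ} (hν : ν ≠ 0) (hle : ∀ i, ν i ≤ g i) : cls g ≤ cls ν := by
  obtain ⟨hlt, h0⟩ := cls_mem hν
  refine cls_le (i := ⟨cls ν, hlt⟩) ?_
  have := hle ⟨cls ν, hlt⟩
  omega

lemma sum_two_point (f h : Fin n → ℕ) (a b : Fin n) (hab : a ≠ b)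
    (hagree : ∀ k, k ≠ a → k ≠ b → f k = h k) :
    (∑ k, f k) + h a + h b = (∑ k, h k) + f a + f b := by
  classical
  have hmem : b ∈ Finset.univ.erase a := Finset.mem_erase.mpr ⟨Ne.symm hab, Finset.mem_univ b⟩
  have hf : ∑ k, f k = f a + (f b + ∑ k ∈ (Finset.univ.erase a).erase b, f k) := by
    rw [Finset.add_sum_erase _ f hmem, Finset.add_sum_erase _ f (Finset.mem_univ a)]
  have hh : ∑ k, h k = h a + (h b + ∑ k ∈ (Finset.univ.erase a).erase b, h k) := by
    rw [Finset.add_sum_erase _ h hmem, Finset.add_sum_erase _ h (Finset.mem_univ a)]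
  have htail : ∑ k ∈ (Finset.univ.erase a).erase b, f k
      = ∑ k ∈ (Finset.univ.erase a).erase b, h k := by
    refine Finset.sum_congr rfl fun k hk => ?_
    simp only [Finset.mem_erase] at hk
    exact hagree k hk.2.1 hk.1
  omega

lemma bump_spec {S : Set (Fin n → ℕ)} (hst : IsStable S) {ν g : Fin n → ℕ}
    (hνS : ν ∈ S) (hν0 : ν ≠ 0) (hle : ∀ i, ν i ≤ g i) {j : Fin n}
    (hj : cls ν < (j : ℕ)) (hjlt : ν j < g j) :
    bump ν j ∈ S ∧ (∀ i, bump ν j i ≤ g i) ∧ (∑ i, bump ν j i = ∑ i, ν i) ∧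
      (∑ i, (g i - bump ν j i) * ((i : ℕ) + 1)) < ∑ i, (g i - ν i) * ((i : ℕ) + 1) := by
  obtain ⟨hcn, hc0⟩ := cls_mem hν0
  set a : Fin n := ⟨cls ν, hcn⟩ with ha
  have hca : (a : ℕ) = cls ν := rfl
  have haj : a ≠ j := by
    intro h
    rw [← h, hca] at hj
    exact lt_irrefl _ hj
  have hbv : ∀ k, bump ν j k = if k = a then ν a - 1 else if k = j then ν k + 1 else ν k := by
    intro k
    unfold bump
    by_cases hk : (k : ℕ) = cls ν
    · have hk' : k = a := Fin.ext hk
      simp [hk, hk', hca]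
    · have hk' : k ≠ a := fun h => hk (by rw [h])
      simp [hk, hk']
  have hmemS : bump ν j ∈ S := hst ν hνS j hj
  have hble : ∀ i, bump ν j i ≤ g i := by
    intro i
    rw [hbv]
    have h1 := hle i
    have h2 := hle a
    split_ifs with hia hij
    · subst hia; omega
    · subst hij; omega
    · exact h1
  have hagree : ∀ k, k ≠ a → k ≠ j → bump ν j k = ν k := by
    intro k hka hkj
    rw [hbv]
    simp [hka, hkj]
  have hba : bump ν j a = ν a - 1 := by rw [hbv]; simp
  have hbj : bump ν j j = ν j + 1 := by rw [hbv]; simp [Ne.symm haj]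
  have hνa : 1 ≤ ν a := Nat.one_le_iff_ne_zero.mpr hc0
  have hsum := sum_two_point (bump ν j) ν a j haj hagree
  have hsumeq : ∑ i, bump ν j i = ∑ i, ν i := by
    rw [hba, hbj] at hsum
    omega
  refine ⟨hmemS, hble, hsumeq, ?_⟩
  have hM := sum_two_point (fun k => (g k - bump ν j k) * ((k : ℕ) + 1))
      (fun k => (g k - ν k) * ((k : ℕ) + 1)) a j haj
      (fun k hka hkj => by rw [hagree k hka hkj])
  rw [hba, hbj] at hM
  have hga : ν a ≤ g a := hle a
  have e1 : g a - (ν a - 1) = (g a - ν a) + 1 := by omega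
  have e2 : g j - (ν j + 1) = (g j - ν j) - 1 := by omega
  rw [e1, e2] at hM
  have e3 : ((g a - ν a) + 1) * ((a : ℕ) + 1) = (g a - ν a) * ((a : ℕ) + 1) + ((a : ℕ) + 1) := by
    ring
  have e4 : ((g j - ν j) - 1) * ((j : ℕ) + 1) = (g j - ν j) * ((j : ℕ) + 1) - ((j : ℕ) + 1) := by
    rw [Nat.sub_mul, one_mul]
  have e5 : ((j : ℕ) + 1) ≤ (g j - ν j) * ((j : ℕ) + 1) :=
    Nat.le_mul_of_pos_left _ (by omega)
  rw [e3, e4] at hM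
  have hcj : (a : ℕ) + 1 < (j : ℕ) + 1 := by omega
  generalize hP : (g a - ν a) * ((a : ℕ) + 1) = P at hM
  generalize hQ : (g j - ν j) * ((j : ℕ) + 1) = Q at hM e5
  omega


lemma normalizeAux {S : Set (Fin n → ℕ)} (h0 : (0 : Fin n → ℕ) ∉ S) (hst : IsStable S)
    (g : Fin n → ℕ) :
    ∀ (m : ℕ) (ν : Fin n → ℕ), (∑ i, (g i - ν i) * ((i : ℕ) + 1)) < m → ν ∈ S →
      (∀ i, ν i ≤ g i) →
      ∃ ν', ν' ∈ S ∧ (∀ i, ν' i ≤ g i) ∧ (∑ i, ν' i = ∑ i, ν i) ∧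
        ∀ j : Fin n, cls ν' < (j : ℕ) → ν' j = g j := by
  intro m
  induction m with
  | zero => intro ν hM; exact absurd hM (Nat.not_lt_zero _)
  | succ m ih =>
    intro ν hM hνS hνg
    by_cases hdone : ∀ j : Fin n, cls ν < (j : ℕ) → ν j = g j
    · exact ⟨ν, hνS, hνg, rfl, hdone⟩
    · push_neg at hdone
      obtain ⟨j, hjc, hjne⟩ := hdone
      have hjlt : ν j < g j := lt_of_le_of_ne (hνg j) hjne
      have hν0 : ν ≠ 0 := fun h => h0 (h ▸ hνS)
      obtain ⟨hbS, hble, hbsum, hbM⟩ := bump_spec hst hνS hν0 hνg hjc hjlt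
      obtain ⟨ν', h1, h2, h3, h4⟩ := ih (bump ν j) (by omega) hbS hble
      exact ⟨ν', h1, h2, by rw [h3, hbsum], h4⟩

lemma gen_unique {S : Set (Fin n → ℕ)} (h0 : (0 : Fin n → ℕ) ∉ S) {μ g1 g2 : Fin n → ℕ}
    (hg1S : g1 ∈ S) (hg1 : ∀ ν ∈ S, (∀ i, ν i ≤ g1 i) → ν = g1)
    (hg2S : g2 ∈ S) (hg2 : ∀ ν ∈ S, (∀ i, ν i ≤ g2 i) → ν = g2)
    (hle1 : ∀ i, g1 i ≤ μ i) (heq1 : ∀ j : Fin n, cls g1 < (j : ℕ) → g1 j = μ j)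
    (hle2 : ∀ i, g2 i ≤ μ i) (heq2 : ∀ j : Fin n, cls g2 < (j : ℕ) → g2 j = μ j) :
    g1 = g2 := by
  have key : ∀ (a b : Fin n → ℕ), (∀ j : Fin n, cls a < (j : ℕ) → a j = μ j) →
      (∀ i, b i ≤ μ i) → cls a < cls b → ∀ i, b i ≤ a i := by
    intro a b ha2 hb1 hab i
    by_cases hi : (i : ℕ) < cls b
    · rw [eq_zero_of_lt_cls hi]
      exact Nat.zero_le _
    · rw [ha2 i (by omega)]
      exact hb1 i
  have h10 : g1 ≠ 0 := fun h => h0 (h ▸ hg1S)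
  have comparable : (∀ i, g1 i ≤ g2 i) ∨ (∀ i, g2 i ≤ g1 i) := by
    rcases lt_trichotomy (cls g1) (cls g2) with h | h | h
    · exact Or.inr (key g1 g2 heq1 hle2 h)
    · obtain ⟨hcn, _⟩ := cls_mem h10
      set a : Fin n := ⟨cls g1, hcn⟩ with ha
      have hoff : ∀ i, i ≠ a → g1 i = g2 i := by
        intro i hia
        have hne : (i : ℕ) ≠ cls g1 := fun hh => hia (Fin.ext hh)
        rcases lt_or_gt_of_ne hne with hlt | hgt
        · rw [eq_zero_of_lt_cls hlt, eq_zero_of_lt_cls (show (i : ℕ) < cls g2 by omega)]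
        · rw [heq1 i hgt, heq2 i (by omega)]
      rcases le_total (g1 a) (g2 a) with hc | hc
      · refine Or.inl fun i => ?_
        by_cases hia : i = a
        · subst hia; exact hc
        · rw [hoff i hia]
      · refine Or.inr fun i => ?_
        by_cases hia : i = a
        · subst hia; exact hc
        · rw [hoff i hia]
    · exact Or.inl (key g2 g1 heq2 hle1 h)
  rcases comparable with h | h
  · exact hg2 g1 hg1S h
  · exact (hg1 g2 hg2S h).symm

end Aux

/-- For a stable monomial ideal S and a monomial x^μ ∈ S, there is a unique
pair (g, h) with g a minimal generator of S, x^μ = g · h, and every variable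
x_i dividing h satisfying i ≤ min(g). -/
theorem stable_unique_decomposition {n : ℕ} (S : Set (Fin n → ℕ))
    (hS : IsMonIdeal S) (h0 : (0 : Fin n → ℕ) ∉ S) (hst : IsStable S)
    (μ : Fin n → ℕ) (hμ : μ ∈ S) :
    ∃! p : (Fin n → ℕ) × (Fin n → ℕ), p.1 ∈ MinGen S ∧
      (∀ i, μ i = p.1 i + p.2 i) ∧
      ∀ i : Fin n, p.2 i ≠ 0 → (i : ℕ) ≤ cls p.1 := by
  classical
  have hgrab := Nat.sInf_mem (s := {d : ℕ | ∃ g : Fin n → ℕ, (g ∈ S ∧ (∀ i, g i ≤ μ i) ∧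
      ∀ j : Fin n, cls g < (j : ℕ) → g j = μ j) ∧ ∑ i, g i = d})
      ⟨∑ i, μ i, μ, ⟨hμ, fun i => le_refl _, fun j _ => rfl⟩, rfl⟩
  obtain ⟨g, ⟨hgS, hgle, hgeq⟩, hgdeg⟩ := hgrab
  have hmin' : ∀ ν' : Fin n → ℕ, (ν' ∈ S ∧ (∀ i, ν' i ≤ μ i) ∧
      ∀ j : Fin n, cls ν' < (j : ℕ) → ν' j = μ j) → ∑ i, g i ≤ ∑ i, ν' i :=
    fun ν' hp => hgdeg ▸ Nat.sInf_le ⟨ν', hp, rfl⟩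
  clear hgdeg
  -- g is a minimal generator
  have hgmin : ∀ ν ∈ S, (∀ i, ν i ≤ g i) → ν = g := by
    intro ν hνS hνle
    obtain ⟨ν', h1, h2, h3, h4⟩ := normalizeAux h0 hst g
      ((∑ i, (g i - ν i) * ((i : ℕ) + 1)) + 1) ν (Nat.lt_succ_self _) hνS hνle
    have hν'0 : ν' ≠ 0 := fun h => h0 (h ▸ h1)
    have hclsle : cls g ≤ cls ν' := cls_mono hν'0 h2
    have hν'D : ν' ∈ S ∧ (∀ i, ν' i ≤ μ i) ∧ ∀ j : Fin n, cls ν' < (j : ℕ) → ν' j = μ j := by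
      refine ⟨h1, fun i => (h2 i).trans (hgle i), fun j hj => ?_⟩
      rw [h4 j hj]
      exact hgeq j (by omega)
    have hsle : ∑ i, g i ≤ ∑ i, ν i := h3 ▸ hmin' ν' hν'D
    have hsge : ∑ i, ν i ≤ ∑ i, g i := Finset.sum_le_sum fun i _ => hνle i
    have hsum : ∑ i, ν i = ∑ i, g i := by omega
    funext i
    by_contra hne
    have : ∑ i, ν i < ∑ i, g i :=
      Finset.sum_lt_sum (fun i _ => hνle i) ⟨i, Finset.mem_univ i, lt_of_le_of_ne (hνle i) hne⟩
    omega
  refine ⟨⟨g, fun i => μ i - g i⟩, ⟨⟨hgS, hgmin⟩, fun i => by have := hgle i; simp; omega,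
    fun i hi => ?_⟩, ?_⟩
  · by_contra hgt
    simp only at hi hgt ⊢
    exact hi (by rw [hgeq i (by omega)]; omega)
  · rintro ⟨g', h'⟩ ⟨⟨hg'S, hg'min⟩, hsum', hsupp'⟩
    simp only at hsum' hsupp'
    have hle' : ∀ i, g' i ≤ μ i := fun i => by have := hsum' i; omega
    have heq' : ∀ j : Fin n, cls g' < (j : ℕ) → g' j = μ j := by
      intro j hj
      have hz : h' j = 0 := by
        by_contra hz
        exact absurd (hsupp' j hz) (by omega)
      have := hsum' j
      omega
    have hgg : g' = g := gen_unique h0 hg'S hg'min hgS hgmin hle' heq' hgle hgeq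
    refine Prod.ext hgg (funext fun i => ?_)
    have := hsum' i
    rw [hgg] at this
    simp
    omega
end

section
/- Let H = {h_1,...,h_r} be a P-ordered Pommaret basis of a quasi-stable monomial ideal I (sorted first by class, then lexicographically within each class). Then for each α < r, the colon ideal ⟨h_{α+1},...,h_r⟩ : ⟨h_α⟩ equals the ideal generated by the non-multiplicative variables of h_α, i.e., ⟨x_{cls(h_α)+1},...,x_n⟩. -/
/-- Lexicographic comparison of exponent vectors: μ < ν if at the largest
index where they differ, the exponent of μ is smaller. -/
def LexLt {n : ℕ} (μ ν : Fin n → ℕ) : Prop :=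
  ∃ k : Fin n, μ k < ν k ∧ ∀ j : Fin n, k < j → μ j = ν j

/-- A P-ordering: sorted first by class, then lexicographically within each
class. -/
def POrdered {n r : ℕ} (h : Fin r → (Fin n → ℕ)) : Prop :=
  ∀ a b : Fin r, a < b →
    cls (h a) < cls (h b) ∨ (cls (h a) = cls (h b) ∧ LexLt (h a) (h b))

lemma cls_le_of_ne {n : ℕ} {μ : Fin n → ℕ} {i : Fin n} (hi : μ i ≠ 0) : cls μ ≤ (i : ℕ) :=
  Nat.sInf_le ⟨i.isLt, by simpa using hi⟩

lemma apply_eq_zero_of_lt_cls {n : ℕ} {μ : Fin n → ℕ} {i : Fin n} (hi : (i : ℕ) < cls μ) :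
    μ i = 0 := by
  by_contra hne
  exact absurd (cls_le_of_ne hne) (by omega)

lemma cls_spec {n : ℕ} {μ : Fin n → ℕ} (hμ : ∃ i, μ i ≠ 0) :
    ∃ hlt : cls μ < n, μ ⟨cls μ, hlt⟩ ≠ 0 := by
  have hne : {i : ℕ | ∃ hi : i < n, μ ⟨i, hi⟩ ≠ 0}.Nonempty := by
    obtain ⟨i, hi⟩ := hμ
    exact ⟨(i : ℕ), i.isLt, by simpa using hi⟩
  exact Nat.sInf_mem hne

lemma cls_eq_zero {n : ℕ} {μ : Fin n → ℕ} (hμ : ∀ i, μ i = 0) : cls μ = 0 := by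
  have he : {i : ℕ | ∃ hi : i < n, μ ⟨i, hi⟩ ≠ 0} = ∅ := by
    ext i; simp [hμ]
  rw [cls, he, Nat.sInf_empty]

/-- For a P-ordered Pommaret basis h_1, …, h_r of a quasi-stable ideal, the
colon ideal ⟨h_{α+1}, …, h_r⟩ : ⟨h_α⟩ is generated by the non-multiplicative
variables of h_α (stated via membership of monomials). -/
theorem colon_ideal_eq_nonmult_vars {n r : ℕ} (h : Fin r → (Fin n → ℕ))
    (hPB : ∀ ν, MemMonIdeal (Set.range h) ν →
      ∃! g, g ∈ Set.range h ∧ InvDvd g ν)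
    (hord : POrdered h) (α : Fin r) (hα : (α : ℕ) + 1 < r) :
    ∀ ν : Fin n → ℕ,
      (∃ β : Fin r, α < β ∧ ∀ i, h β i ≤ ν i + h α i) ↔
      ∃ i : Fin n, cls (h α) < (i : ℕ) ∧ 0 < ν i := by
  intro ν
  constructor
  · -- forward direction
    rintro ⟨β, hαβ, hdvd⟩
    by_contra hno
    push_neg at hno
    have hν0 : ∀ i : Fin n, cls (h α) < (i : ℕ) → ν i = 0 :=
      fun i hi => Nat.le_zero.mp (hno i hi)
    have hβle : ∀ i : Fin n, cls (h α) < (i : ℕ) → h β i ≤ h α i := by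
      intro i hi
      have := hdvd i
      rw [hν0 i hi] at this
      simpa using this
    rcases hord α β hαβ with hcc | ⟨hcc, k, hk1, hk2⟩
    · -- case cls (h α) < cls (h β)
      have hβne : ∃ i, h β i ≠ 0 := by
        by_contra hz
        push_neg at hz
        have h0 : cls (h β) = 0 := cls_eq_zero hz
        omega
      obtain ⟨hc''n, hβc''⟩ := cls_spec hβne
      have hαc'' : h β ⟨cls (h β), hc''n⟩ ≤ h α ⟨cls (h β), hc''n⟩ :=
        hβle ⟨cls (h β), hc''n⟩ hcc
      -- the truncated monomial ψ
      set ψ : Fin n → ℕ := fun i => if cls (h α) < (i : ℕ) then h α i else 0 with hψ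
      have hψI : MemMonIdeal (Set.range h) ψ := by
        refine ⟨h β, ⟨β, rfl⟩, ?_⟩
        intro i
        by_cases hi : cls (h α) < (i : ℕ)
        · simp only [hψ, hi, if_pos]
          exact hβle i hi
        · have hlt : (i : ℕ) < cls (h β) := by omega
          have hz := apply_eq_zero_of_lt_cls (μ := h β) (i := i) hlt
          simp [hψ, hi, hz]
      obtain ⟨g, ⟨hg_mem, hg_le, hg_inv⟩, hg_uniq⟩ := hPB ψ hψI
      have hψc'' : ψ ⟨cls (h β), hc''n⟩ ≠ 0 := by
        simp only [hψ, if_pos hcc]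
        omega
      have hgne : ∃ i, g i ≠ 0 := by
        by_contra hz
        push_neg at hz
        have h0 : cls g = 0 := cls_eq_zero hz
        have := hg_inv ⟨cls (h β), hc''n⟩ (show cls g < cls (h β) by omega)
        rw [hz] at this
        exact hψc'' this
      obtain ⟨hgn, hgcls⟩ := cls_spec hgne
      have hcg : cls (h α) < cls g := by
        by_contra hle
        have hle2 := hg_le ⟨cls g, hgn⟩
        simp only [hψ] at hle2
        rw [if_neg (by omega)] at hle2
        omega
      have hψle : ∀ i, ψ i ≤ h α i := by
        intro i
        by_cases hi : cls (h α) < (i : ℕ) <;> simp [hψ, hi]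
      have hgα : InvDvd g (h α) := by
        refine ⟨fun i => le_trans (hg_le i) (hψle i), fun i hi => ?_⟩
        have h1 := hg_inv i hi
        have h2 : ψ i = h α i := by simp only [hψ]; rw [if_pos (by omega)]
        rw [← h2, h1]
      -- h α itself is in the ideal
      obtain ⟨g', hg'1, hg'_uniq⟩ := hPB (h α) ⟨h α, ⟨α, rfl⟩, fun i => le_rfl⟩
      have e1 : g = g' := hg'_uniq g ⟨hg_mem, hgα⟩
      have e2 : h α = g' := hg'_uniq (h α) ⟨⟨α, rfl⟩, fun i => le_rfl, fun i _ => rfl⟩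
      have hge : g = h α := e1.trans e2.symm
      -- but g vanishes at index cls (h α) while h α does not
      have hαne : ∃ i, h α i ≠ 0 := ⟨⟨cls (h β), hc''n⟩, by omega⟩
      obtain ⟨hcn, hαc⟩ := cls_spec hαne
      have hg0 : g ⟨cls (h α), hcn⟩ ≤ ψ ⟨cls (h α), hcn⟩ := hg_le _
      simp only [hψ] at hg0
      rw [if_neg (by omega)] at hg0
      rw [hge] at hg0
      exact hαc (by omega)
    · -- case equal class, LexLt (h α) (h β)
      have hβk : h β k ≠ 0 := by omega
      have hkc : cls (h β) ≤ (k : ℕ) := cls_le_of_ne hβk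
      have hkec : (k : ℕ) = cls (h α) := by
        by_contra hne
        have hkgt : cls (h α) < (k : ℕ) := by omega
        exact absurd (hβle k hkgt) (by omega)
      have hαβdvd : InvDvd (h α) (h β) := by
        constructor
        · intro i
          rcases lt_trichotomy (k : ℕ) (i : ℕ) with hlt | heq | hgt
          · rw [hk2 i (by exact hlt)]
          · have hik : i = k := by apply Fin.ext; omega
            rw [hik]; omega
          · have hz : h α i = 0 := apply_eq_zero_of_lt_cls (by omega)
            omega
        · intro i hi
          exact (hk2 i (by omega)).symm
      obtain ⟨g', hg'1, hg'_uniq⟩ := hPB (h β) ⟨h β, ⟨β, rfl⟩, fun i => le_rfl⟩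
      have e1 : h α = g' := hg'_uniq (h α) ⟨⟨α, rfl⟩, hαβdvd⟩
      have e2 : h β = g' := hg'_uniq (h β) ⟨⟨β, rfl⟩, fun i => le_rfl, fun i _ => rfl⟩
      have heq : h α = h β := e1.trans e2.symm
      rw [heq] at hk1
      omega
  · -- reverse direction
    rintro ⟨i₀, hi₀c, hi₀⟩
    set μ : Fin n → ℕ := fun i => h α i + if i = i₀ then 1 else 0 with hμ
    have hμI : MemMonIdeal (Set.range h) μ := ⟨h α, ⟨α, rfl⟩, fun i => by simp [hμ]⟩
    obtain ⟨g, ⟨⟨β, hβg⟩, hg_le, hg_inv⟩, hg_uniq⟩ := hPB μ hμI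
    subst hβg
    have hμi₀ : μ i₀ = h α i₀ + 1 := by simp [hμ]
    have hβdvd : ∀ i, h β i ≤ ν i + h α i := by
      intro i
      have hle := hg_le i
      by_cases hi : i = i₀
      · subst hi
        rw [hμi₀] at hle
        omega
      · simp only [hμ, if_neg hi, add_zero] at hle
        omega
    refine ⟨β, ?_, hβdvd⟩
    rcases lt_trichotomy α β with hlt | heq | hgt
    · exact hlt
    · exfalso
      subst heq
      have := hg_inv i₀ hi₀c
      rw [hμi₀] at this
      omega
    · exfalso
      rcases hord β α hgt with hcc | ⟨hcc, k, hk1, hk2⟩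
      · -- cls (h β) < cls (h α)
        have hβne : ∃ i, h β i ≠ 0 := by
          by_contra hz
          push_neg at hz
          have h0 : cls (h β) = 0 := cls_eq_zero hz
          have := hg_inv i₀ (by omega)
          rw [hz i₀, hμi₀] at this
          omega
        obtain ⟨hc'n, hβc'⟩ := cls_spec hβne
        have hle := hg_le ⟨cls (h β), hc'n⟩
        have hα0 : h α ⟨cls (h β), hc'n⟩ = 0 := apply_eq_zero_of_lt_cls (by simpa using hcc)
        have hne : (⟨cls (h β), hc'n⟩ : Fin n) ≠ i₀ := by
          intro he
          have : cls (h β) = (i₀ : ℕ) := by rw [← he]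
          omega
        simp only [hμ, if_neg hne, add_zero, hα0] at hle
        omega
      · -- equal class, LexLt (h β) (h α)
        have hβi₀ := hg_inv i₀ (by omega)
        rw [hμi₀] at hβi₀
        have hki₀ : ¬ (k < i₀) := by
          intro hki
          have := hk2 i₀ hki
          omega
        have hck : cls (h α) < (k : ℕ) := by
          have hik : (i₀ : ℕ) ≤ (k : ℕ) := by
            rcases Fin.lt_or_le k i₀ with h1 | h2
            · exact absurd h1 hki₀
            · exact h2
          omega
        have hβk := hg_inv k (by omega)
        have hμk : μ k = h α k + if k = i₀ then 1 else 0 := rfl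
        rw [hμk] at hβk
        by_cases hki : k = i₀
        · subst hki
          omega
        · rw [if_neg hki, add_zero] at hβk
          omega
end
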